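/- Let $\alpha \in (1/4, 1]$, let $f : \mathbb{T} \to \mathbb{C}$ satisfy $|f(z)-f(w)| \le C|z-w|^{\alpha}$ for all $z,w \in \mathbb{T}$ and some constant $C>0$, let $K \subseteq \mathbb{T}$ be a nonempty compact set, and suppose $f(z)=0$ for every $z \in K$. Then for each $z \in K$, the function $f_z(w) = \frac{f(w)\,(\mathrm{dist}(w,K))^{\alpha}}{z-w}$ belongs to $L_2(\mathbb{T})$. -/

import Mathlib

open MeasureTheory Set

/-- The normalized Lebesgue (Haar) measure on the unit circle, as a measure on `ℂ`. -/
noncomputable def circleMeasure : Measure ℂ :=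
  (ENNReal.ofReal (2 * Real.pi))⁻¹ •
    Measure.map (fun t : ℝ => Complex.exp (t * Complex.I))
      (volume.restrict (Ioc 0 (2 * Real.pi)))

-- chord length formula
lemma chord (s t : ℝ) :
    ‖Complex.exp (s * Complex.I) - Complex.exp (t * Complex.I)‖
      = 2 * |Real.sin ((s - t) / 2)| := by
  have key : ‖Complex.exp (s * Complex.I) - Complex.exp (t * Complex.I)‖ ^ 2
      = (2 * |Real.sin ((s - t) / 2)|) ^ 2 := by
    rw [Complex.sq_norm, Complex.normSq_apply]
    simp only [Complex.sub_re, Complex.sub_im, Complex.exp_ofReal_mul_I_re,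
      Complex.exp_ofReal_mul_I_im]
    have h1 : Real.sin ((s - t)/2) ^ 2 = 1/2 - Real.cos (s - t) / 2 := by
      have h := Real.sin_sq_eq_half_sub ((s - t)/2)
      rw [show 2 * ((s-t)/2) = s - t by ring] at h
      linarith
    have h2 : Real.cos (s - t) = Real.cos s * Real.cos t + Real.sin s * Real.sin t :=
      Real.cos_sub s t
    have h3 : Real.sin s ^ 2 + Real.cos s ^ 2 = 1 := Real.sin_sq_add_cos_sq s
    have h4 : Real.sin t ^ 2 + Real.cos t ^ 2 = 1 := Real.sin_sq_add_cos_sq t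
    rw [mul_pow, sq_abs]
    nlinarith
  have h0 : (0:ℝ) ≤ ‖Complex.exp (s * Complex.I) - Complex.exp (t * Complex.I)‖ :=
    norm_nonneg _
  have h1 : (0:ℝ) ≤ 2 * |Real.sin ((s - t) / 2)| := by positivity
  nlinarith [key, h0, h1]

-- |x|^q interval integrable for q > -1
lemma absRpowII {q : ℝ} (hq : -1 < q) (a b : ℝ) :
    IntervalIntegrable (fun x : ℝ => |x| ^ q) volume a b := by
  have key : ∀ c : ℝ, 0 ≤ c → IntervalIntegrable (fun x : ℝ => |x| ^ q) volume 0 c := by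
    intro c hc
    rw [intervalIntegrable_iff_integrableOn_Ioc_of_le hc]
    refine IntegrableOn.congr_fun (f := fun x : ℝ => x ^ q)
      ((intervalIntegrable_iff_integrableOn_Ioc_of_le hc).1
        (intervalIntegral.intervalIntegrable_rpow' hq)) (fun x hx => ?_) measurableSet_Ioc
    rw [abs_of_pos hx.1]
  have key2 : ∀ c : ℝ, IntervalIntegrable (fun x : ℝ => |x| ^ q) volume 0 c := by
    intro c
    rcases le_or_gt 0 c with h | h
    · exact key c h
    · have h2 := (key (-c) (by linarith))
      have := (IntervalIntegrable.iff_comp_neg (f := fun x : ℝ => |x| ^ q) (a := 0) (b := -c)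
        (by finiteness)).1 h2
      simp only [abs_neg, neg_zero, neg_neg] at this
      exact this
  exact (key2 a).symm.trans (key2 b)

lemma absRpowInt {q : ℝ} (hq : -1 < q) (a b c : ℝ) (hbc : b ≤ c) :
    IntegrableOn (fun t : ℝ => |t - a| ^ q) (Ioc b c) volume := by
  have := (absRpowII hq (b - a) (c - a)).comp_sub_right a
  rw [sub_add_cancel, sub_add_cancel] at this
  exact (intervalIntegrable_iff_integrableOn_Ioc_of_le hbc).1 this

lemma jordan2 {x : ℝ} (hx : |x| ≤ Real.pi) : (2/Real.pi) * |x| ≤ 2 * |Real.sin (x/2)| := by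
  have h2 : |x/2| ≤ Real.pi / 2 := by
    rw [abs_div, abs_two]; linarith
  have := Real.mul_abs_le_abs_sin h2
  rw [abs_div, abs_two] at this
  linarith

lemma half_bound {q : ℝ} (hq : q < 0) {v : ℝ} (hv : |v| ≤ Real.pi) :
    (2 * |Real.sin (v/2)|) ^ q ≤ (2/Real.pi) ^ q * |v| ^ q := by
  rcases eq_or_ne v 0 with rfl | hv0
  · simp [Real.zero_rpow hq.ne]
  · have h1 : (0:ℝ) < (2/Real.pi) * |v| := by
      have := Real.pi_pos
      have : (0:ℝ) < |v| := abs_pos.2 hv0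
      positivity
    calc (2 * |Real.sin (v/2)|) ^ q ≤ ((2/Real.pi) * |v|) ^ q :=
          Real.rpow_le_rpow_of_nonpos h1 (jordan2 hv) hq.le
      _ = (2/Real.pi) ^ q * |v| ^ q := Real.mul_rpow (by positivity) (abs_nonneg v)

lemma key_bound {q : ℝ} (hq : q < 0) {u : ℝ} (hu1 : -(3*Real.pi) < u) (hu2 : u < Real.pi) :
    (2 * |Real.sin (u/2)|) ^ q ≤ (2/Real.pi) ^ q * (|u| ^ q + |u + 2*Real.pi| ^ q) := by
  have hπ := Real.pi_pos
  have hc : (0:ℝ) ≤ (2/Real.pi) ^ q := Real.rpow_nonneg (by positivity) q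
  rcases le_or_gt (|u|) Real.pi with h | h
  · have := half_bound hq h
    have h2 : (0:ℝ) ≤ |u + 2*Real.pi| ^ q := Real.rpow_nonneg (abs_nonneg _) q
    nlinarith
  · have hu : u < -Real.pi := by
      rcases le_or_gt 0 u with h0 | h0
      · rw [abs_of_nonneg h0] at h; linarith
      · rw [abs_of_neg h0] at h; linarith
    set v := u + 2*Real.pi with hv
    have hvabs : |v| ≤ Real.pi := abs_le.2 ⟨by rw [hv]; linarith, by rw [hv]; linarith⟩
    have hsin : |Real.sin (u/2)| = |Real.sin (v/2)| := by
      have huv : u/2 = v/2 - Real.pi := by rw [hv]; ring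
      rw [huv, Real.sin_sub_pi, abs_neg]
    rw [hsin]
    have := half_bound hq hvabs
    have h2 : (0:ℝ) ≤ |u| ^ q := Real.rpow_nonneg (abs_nonneg _) q
    nlinarith

lemma circleInt {q : ℝ} (hq1 : -1 < q) {z : ℂ} (hz : ‖z‖ = 1) :
    Integrable (fun w : ℂ => ‖z - w‖ ^ q) circleMeasure := by
  have hπ := Real.pi_pos
  have hφ : Measurable (fun t : ℝ => Complex.exp (t * Complex.I)) := by fun_prop
  have hm : Measurable (fun w : ℂ => ‖z - w‖ ^ q) := by
    have : Measurable (fun w : ℂ => ‖z - w‖) :=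
      (continuous_norm.comp (continuous_const.sub continuous_id)).measurable
    measurability
  rw [circleMeasure]
  refine (integrable_smul_measure ?_ ?_).2 ?_
  · exact ENNReal.inv_ne_zero.2 ENNReal.ofReal_ne_top
  · exact ENNReal.inv_ne_top.2 (by simp [ENNReal.ofReal_eq_zero]; linarith)
  rw [integrable_map_measure hm.aestronglyMeasurable hφ.aemeasurable]
  have h2π : (0:ℝ) ≤ 2 * Real.pi := by linarith
  rcases le_or_gt 0 q with hq0 | hq0
  · refine Integrable.mono' (g := fun _ => (2:ℝ) ^ q)
      (integrableOn_const measure_Ioc_lt_top.ne)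
      ((hm.comp hφ).aestronglyMeasurable) (ae_of_all _ fun t => ?_)
    simp only [Function.comp_apply]
    rw [Real.norm_eq_abs, abs_of_nonneg (Real.rpow_nonneg (norm_nonneg _) q)]
    apply Real.rpow_le_rpow (norm_nonneg _) ?_ hq0
    calc ‖z - Complex.exp (t*Complex.I)‖
        ≤ ‖z‖ + ‖Complex.exp (t*Complex.I)‖ := by
          simpa [sub_eq_add_neg] using norm_add_le z (-(Complex.exp (t*Complex.I)))
      _ = 2 := by rw [hz, Complex.norm_exp_ofReal_mul_I]; norm_num
  · set s := Complex.arg z with hsdef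
    have hs1 : -Real.pi < s := Complex.neg_pi_lt_arg z
    have hs2 : s ≤ Real.pi := Complex.arg_le_pi z
    have hzexp : Complex.exp (s * Complex.I) = z := by
      have h := Complex.norm_mul_exp_arg_mul_I z
      rwa [hz, Complex.ofReal_one, one_mul] at h
    refine Integrable.mono'
      (g := fun t => (2/Real.pi)^q * (|t - s| ^ q + |t - (s + 2*Real.pi)| ^ q))
      (((absRpowInt hq1 s 0 (2*Real.pi) h2π).add
        (absRpowInt hq1 (s + 2*Real.pi) 0 (2*Real.pi) h2π)).const_mul _)
      ((hm.comp hφ).aestronglyMeasurable)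
      ((ae_restrict_iff' measurableSet_Ioc).2 (ae_of_all _ fun t ht => ?_))
    simp only [Function.comp_apply]
    rw [Real.norm_eq_abs, abs_of_nonneg (Real.rpow_nonneg (norm_nonneg _) q),
      ← hzexp, chord]
    have h1 := key_bound hq0 (u := s - t) (by linarith [ht.2]) (by linarith [ht.1])
    rw [show |s - t| = |t - s| from abs_sub_comm s t,
        show |s - t + 2*Real.pi| = |t - (s + 2*Real.pi)| by
          rw [show s - t + 2*Real.pi = -(t - (s + 2*Real.pi)) by ring, abs_neg]] at h1
    exact h1

lemma circle_ae : ∀ᵐ w ∂circleMeasure, ‖w‖ = 1 := by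
  rw [ae_iff, circleMeasure, Measure.smul_apply, smul_eq_mul]
  have hφ : Measurable (fun t : ℝ => Complex.exp (t * Complex.I)) := by fun_prop
  have hs : MeasurableSet {w : ℂ | ¬ ‖w‖ = 1} := by
    have h : {w : ℂ | ¬ ‖w‖ = 1} = (norm ⁻¹' ({1} : Set ℝ))ᶜ := by
      ext w; simp
    rw [h]
    exact (continuous_norm.measurable (measurableSet_singleton 1)).compl
  rw [Measure.map_apply hφ hs]
  have h : (fun t : ℝ => Complex.exp (t * Complex.I)) ⁻¹' {w : ℂ | ¬ ‖w‖ = 1} = ∅ := by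
    ext t; simp [Complex.norm_exp_ofReal_mul_I]
  rw [h]; simp

theorem stmt_5 (α : ℝ) (hα1 : 1/4 < α) (hα2 : α ≤ 1)
    (f : ℂ → ℂ) (C : ℝ) (hC : 0 < C)
    (hHolder : ∀ z ∈ Metric.sphere (0:ℂ) 1, ∀ w ∈ Metric.sphere (0:ℂ) 1,
      ‖f z - f w‖ ≤ C * (‖z - w‖) ^ α)
    (K : Set ℂ) (hKsub : K ⊆ Metric.sphere (0:ℂ) 1) (hKne : K.Nonempty)
    (hKcomp : IsCompact K) (hvanish : ∀ z ∈ K, f z = 0) :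
    ∀ z ∈ K,
      MemLp (fun w : ℂ => f w * ((Metric.infDist w K : ℝ) ^ α : ℝ) / (z - w)) 2
        circleMeasure := by
  intro z hz
  have hπ := Real.pi_pos
  have hα0 : 0 < α := by linarith
  have hzsph : z ∈ Metric.sphere (0:ℂ) 1 := hKsub hz
  have hzabs : ‖z‖ = 1 := by
    simpa [Complex.dist_eq] using hzsph
  -- continuity of f on the sphere
  have hcont : ContinuousOn f (Metric.sphere (0:ℂ) 1) := by
    intro w hw
    rw [Metric.continuousWithinAt_iff]
    intro ε hε
    refine ⟨(ε / (2*C)) ^ (1/α), Real.rpow_pos_of_pos (by positivity) _, fun x hx hxd => ?_⟩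
    have h1 : ‖f x - f w‖ ≤ C * ‖x - w‖ ^ α := hHolder x hx w hw
    have hd : dist x w = ‖x - w‖ := Complex.dist_eq x w
    have h3 : ((ε / (2*C)) ^ (1/α)) ^ α = ε / (2*C) := by
      rw [← Real.rpow_mul (by positivity), one_div, inv_mul_cancel₀ hα0.ne', Real.rpow_one]
    have h2 : ‖x - w‖ ^ α < ((ε / (2*C)) ^ (1/α)) ^ α := by
      apply Real.rpow_lt_rpow (norm_nonneg _) _ hα0
      rwa [hd] at hxd
    have h4 : C * (ε / (2*C)) = ε/2 := by field_simp
    rw [dist_eq_norm]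
    calc ‖f x - f w‖ = ‖f x - f w‖ := rfl
      _ ≤ C * ‖x - w‖ ^ α := h1
      _ < C * (ε / (2*C)) := by rw [← h3]; exact (mul_lt_mul_iff_right₀ hC).2 h2
      _ < ε := by rw [h4]; linarith
  -- Tietze extension
  obtain ⟨F, hF⟩ := ContinuousMap.exists_restrict_eq (Y := ℂ) Metric.isClosed_sphere
    ⟨_, hcont.restrict⟩
  have hFf : ∀ w ∈ Metric.sphere (0:ℂ) 1, F w = f w := by
    intro w hw
    have h := DFunLike.congr_fun hF (⟨w, hw⟩ : Metric.sphere (0:ℂ) 1)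
    simpa [ContinuousMap.restrict_apply] using h
  -- measurable substitute
  have hG : Measurable (fun w : ℂ => F w * ((Metric.infDist w K : ℝ) ^ α : ℝ) / (z - w)) := by
    have h1 : Measurable (fun w : ℂ => Metric.infDist w K) :=
      (Metric.continuous_infDist_pt K).measurable
    have h1' : Measurable (fun w : ℂ => (Metric.infDist w K : ℝ) ^ α) := by measurability
    have h2 : Measurable F := F.continuous.measurable
    exact (h2.mul (Complex.measurable_ofReal.comp h1')).div
      (measurable_const.sub measurable_id)
  -- pointwise bound on the sphere
  have hpt : ∀ w ∈ Metric.sphere (0:ℂ) 1,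
      ‖f w * ((Metric.infDist w K : ℝ) ^ α : ℝ) / (z - w)‖
        ≤ C * ‖z - w‖ ^ (2*α - 1) := by
    intro w hw
    set dw := Metric.infDist w K with hdw
    have hd0 : 0 ≤ dw := Metric.infDist_nonneg
    obtain ⟨z₀, hz₀K, hdz₀⟩ := hKcomp.exists_infDist_eq_dist hKne w
    have hz₀s : z₀ ∈ Metric.sphere (0:ℂ) 1 := hKsub hz₀K
    have hfw : ‖f w‖ ≤ C * dw ^ α := by
      have h := hHolder w hw z₀ hz₀s
      rw [hvanish z₀ hz₀K, sub_zero] at h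
      rwa [show ‖w - z₀‖ = dw by rw [← Complex.dist_eq, hdw, hdz₀]] at h
    have hdle : dw ≤ ‖z - w‖ := by
      rw [hdw]
      calc Metric.infDist w K ≤ dist w z := Metric.infDist_le_dist_of_mem hz
        _ = ‖z - w‖ := by rw [Complex.dist_eq, norm_sub_rev]
    have hnorm : ‖f w * ((dw : ℝ) ^ α : ℝ) / (z - w)‖
        = ‖f w‖ * dw ^ α / ‖z - w‖ := by
      simp only [norm_div, norm_mul, Complex.norm_real, Real.norm_eq_abs,
        abs_of_nonneg (Real.rpow_nonneg hd0 α)]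
    rcases eq_or_ne (z - w) 0 with hzw | hzw
    · have hfw0 : f w = 0 := by
        rw [show w = z from (sub_eq_zero.1 hzw).symm]
        exact hvanish z hz
      rw [hnorm, hfw0]
      simp only [norm_zero, zero_mul, zero_div]
      positivity
    · have hr : 0 < ‖z - w‖ := norm_pos_iff.2 hzw
      rw [hnorm]
      calc ‖f w‖ * dw ^ α / ‖z - w‖
          ≤ (C * dw ^ α) * dw ^ α / ‖z - w‖ := by
            gcongr
        _ = C * (dw ^ α * dw ^ α) / ‖z - w‖ := by ring
        _ = C * dw ^ (2*α) / ‖z - w‖ := by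
            rw [show (2:ℝ)*α = α + α by ring, Real.rpow_add' hd0 (by linarith)]
        _ ≤ C * ‖z - w‖ ^ (2*α) / ‖z - w‖ := by
            gcongr
        _ = C * ‖z - w‖ ^ (2*α - 1) := by
            rw [Real.rpow_sub hr, Real.rpow_one]; ring
  -- the dominating function is MemLp
  have hmg : Measurable (fun w : ℂ => C * ‖z - w‖ ^ (2*α - 1)) := by
    have : Measurable (fun w : ℂ => ‖z - w‖) :=
      (continuous_norm.comp (continuous_const.sub continuous_id)).measurable
    measurability
  have hgmem : MemLp (fun w : ℂ => C * ‖z - w‖ ^ (2*α - 1)) 2 circleMeasure := by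
    rw [memLp_two_iff_integrable_sq hmg.aestronglyMeasurable]
    have heq : (fun w : ℂ => (C * ‖z - w‖ ^ (2*α-1)) ^ 2)
        = fun w : ℂ => C^2 * ‖z - w‖ ^ (2*(2*α-1)) := by
      funext w
      rw [mul_pow, ← Real.rpow_natCast (‖z-w‖ ^ (2*α-1)) 2,
        ← Real.rpow_mul (norm_nonneg _)]
      congr 1
      push_cast
      ring
    rw [heq]
    exact (circleInt (by linarith) hzabs).const_mul (C^2)
  -- a.e. strong measurability of the target
  have haesm : AEStronglyMeasurable
      (fun w : ℂ => f w * ((Metric.infDist w K : ℝ) ^ α : ℝ) / (z - w)) circleMeasure := by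
    refine hG.aestronglyMeasurable.congr ?_
    filter_upwards [circle_ae] with w hw
    have hw' : w ∈ Metric.sphere (0:ℂ) 1 := by
      simp [Metric.mem_sphere, Complex.dist_eq, hw]
    rw [hFf w hw']
  -- conclude
  refine hgmem.mono haesm ?_
  filter_upwards [circle_ae] with w hw
  have hw' : w ∈ Metric.sphere (0:ℂ) 1 := by
    simp [Metric.mem_sphere, Complex.dist_eq, hw]
  refine (hpt w hw').trans ?_
  rw [Real.norm_eq_abs]
  exact le_abs_self _
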